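/- For every real λ > 0 and every prime p ∈ D_λ, f_λ(p)/p ≥ 3 − 6/p, i.e., f_λ(p) ≥ 3p − 6. -/

import Mathlib

/-- The set of natural numbers generated by `A` under addition (containing `0`). -/
def NSgen (A : Set ℕ) : Set ℕ := (AddSubmonoid.closure A : Set ℕ)

/-- `S` is a numerical semigroup: additively closed, contains `0`,
has finite complement in `ℕ`, and `S ≠ ℕ`. -/
def IsNumSgrp (S : Set ℕ) : Prop :=
  0 ∈ S ∧ (∀ a ∈ S, ∀ b ∈ S, a + b ∈ S) ∧ Sᶜ.Finite ∧ S ≠ Set.univ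

/-- The Frobenius number: the largest natural number not in `S`. -/
noncomputable def NSfrob (S : Set ℕ) : ℕ := sSup Sᶜ

/-- The genus: the number of gaps of `S`. -/
noncomputable def NSgenus (S : Set ℕ) : ℕ := Sᶜ.ncard

/-- The multiplicity: the least positive element of `S`. -/
noncomputable def NSmult (S : Set ℕ) : ℕ := sInf {n | n ∈ S ∧ n ≠ 0}

/-- The atoms (minimal generators) of `S`: the set `S* \ (S* + S*)` where `S* = S \ {0}`. -/
def NSatoms (S : Set ℕ) : Set ℕ :=
  {n | n ∈ S ∧ n ≠ 0 ∧ ¬ ∃ a, a ∈ S ∧ a ≠ 0 ∧ ∃ b, b ∈ S ∧ b ≠ 0 ∧ n = a + b}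

/-- The embedding dimension: the number of atoms of `S`. -/
noncomputable def NSembdim (S : Set ℕ) : ℕ := (NSatoms S).ncard

/-- The primes in the interval `I_lam(p) = [p, p + lam*p]`. -/
def primesIn (lam : ℝ) (p : ℕ) : Set ℕ :=
  {q | q.Prime ∧ p ≤ q ∧ (q : ℝ) ≤ p + lam * p}

/-- `S_lam(p)`: the numerical semigroup generated by the primes in `[p, p + lam*p]`. -/
def Slam (lam : ℝ) (p : ℕ) : Set ℕ := NSgen (primesIn lam p)

/-- `D_lam`: the primes `p` such that `[p, p + lam*p]` contains at least two primes. -/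
def Dlam (lam : ℝ) : Set ℕ :=
  {p | p.Prime ∧ ∃ q ∈ primesIn lam p, ∃ r ∈ primesIn lam p, q ≠ r}

/-- `f_lam(p)`: the Frobenius number of `S_lam(p)`. -/
noncomputable def flam (lam : ℝ) (p : ℕ) : ℕ := NSfrob (Slam lam p)

/-- `p_n`, the `n`-th prime in natural order (`nthPrime 1 = 2`). -/
noncomputable def nthPrime (n : ℕ) : ℕ := Nat.nth Nat.Prime (n - 1)

/-- `S_n`: the numerical semigroup generated by all primes `≥ p_n`. -/
noncomputable def Sn (n : ℕ) : Set ℕ := NSgen {q | q.Prime ∧ nthPrime n ≤ q}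

/-- `f_n`: the Frobenius number of `S_n`. -/
noncomputable def fn (n : ℕ) : ℕ := NSfrob (Sn n)

/-- `S(p)`: the numerical semigroup generated by the primes in `[p, 2p]`. -/
def Sp (p : ℕ) : Set ℕ := NSgen {q | q.Prime ∧ p ≤ q ∧ q ≤ 2 * p}

/-- Statement `A(m)`: large `N` of the same parity as `m` are sums of `m` almost equal primes. -/
def Astmt (m : ℕ) : Prop :=
  ∀ δ : ℝ, 0 < δ → ∃ N₀ : ℕ, 0 < N₀ ∧ ∀ N : ℕ, N₀ ≤ N → N % 2 = m % 2 →
    ∃ q : Fin m → ℕ, (∀ i, (q i).Prime) ∧ (∑ i, q i) = N ∧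
      ∀ i, |(N : ℝ) / m - q i| < δ * N

/-- `T(m)`: positive integers `t` such that `1+tm`, `3+tm` and `1+t(m+2)` are all prime. -/
def Tset (m : ℕ) : Set ℕ :=
  {t | 0 < t ∧ (1 + t * m).Prime ∧ (3 + t * m).Prime ∧ (1 + t * (m + 2)).Prime}

lemma my_rep (q r n : ℕ) (hq : q.Prime) (hr : r.Prime) (hne : q ≠ r) (hn : q * r ≤ n) :
    ∃ a b, n = a * q + b * r := by
  haveI : Fact q.Prime := ⟨hq⟩
  have hrz : (r : ZMod q) ≠ 0 := by
    rw [Ne, ZMod.natCast_eq_zero_iff]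
    intro h; exact hne ((Nat.prime_dvd_prime_iff_eq hq hr).mp h)
  set b := ((n : ZMod q) * (r : ZMod q)⁻¹).val with hb
  have hblt : b < q := ZMod.val_lt _
  have hler : b * r < q * r := (Nat.mul_lt_mul_right hr.pos).mpr hblt
  have hle : b * r ≤ n := le_of_lt (lt_of_lt_of_le hler hn)
  have hdvd : q ∣ n - b * r := by
    have h0 : ((n - b * r : ℕ) : ZMod q) = 0 := by
      push_cast [Nat.cast_sub hle]
      rw [hb]
      rw [ZMod.natCast_val, ZMod.cast_id, mul_assoc, inv_mul_cancel₀ hrz, mul_one, sub_self]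
    exact (ZMod.natCast_eq_zero_iff _ _).mp h0
  refine ⟨(n - b * r) / q, b, ?_⟩
  have := Nat.div_mul_cancel hdvd
  omega

lemma my_struct (p : ℕ) (A : Set ℕ) (hA : ∀ a ∈ A, a.Prime ∧ p ≤ a) (hp3 : 3 ≤ p) :
    ∀ n ∈ AddSubmonoid.closure A,
      n = 0 ∨ n ∈ A ∨ (Even n ∧ 2 * p ≤ n) ∨ 3 * p ≤ n := by
  intro n hn
  induction hn using AddSubmonoid.closure_induction with
  | mem x hx => exact Or.inr (Or.inl hx)
  | zero => exact Or.inl rfl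
  | add a b ha hb iha ihb =>
    rcases iha with rfl | iha'
    · simpa using ihb
    rcases ihb with rfl | ihb'
    · simpa using Or.inr iha'
    have fa : (Odd a ∧ p ≤ a) ∨ (Even a ∧ 2 * p ≤ a) ∨ 3 * p ≤ a := by
      rcases iha' with h | h | h
      · exact Or.inl ⟨(hA a h).1.odd_of_ne_two (by have := (hA a h).2; omega), (hA a h).2⟩
      · exact Or.inr (Or.inl h)
      · exact Or.inr (Or.inr h)
    have fb : (Odd b ∧ p ≤ b) ∨ (Even b ∧ 2 * p ≤ b) ∨ 3 * p ≤ b := by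
      rcases ihb' with h | h | h
      · exact Or.inl ⟨(hA b h).1.odd_of_ne_two (by have := (hA b h).2; omega), (hA b h).2⟩
      · exact Or.inr (Or.inl h)
      · exact Or.inr (Or.inr h)
    refine Or.inr (Or.inr ?_)
    rcases Nat.even_or_odd (a + b) with hev | hod
    · refine Or.inl ⟨hev, ?_⟩
      rcases fa with ⟨_, h⟩ | ⟨_, h⟩ | h <;> rcases fb with ⟨_, h'⟩ | ⟨_, h'⟩ | h' <;> omega
    · right
      obtain ⟨k, hk⟩ := hod
      rcases fa with ⟨⟨i, hi⟩, h⟩ | ⟨⟨i, hi⟩, h⟩ | h <;>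
        rcases fb with ⟨⟨j, hj⟩, h'⟩ | ⟨⟨j, hj⟩, h'⟩ | h' <;> omega


theorem statement10 (lam : ℝ) (hlam : 0 < lam) (p : ℕ) (hp : p ∈ Dlam lam) :
    (3 : ℝ) - 6 / p ≤ (flam lam p : ℝ) / p := by
  obtain ⟨hpp, q, hq, r, hr, hne⟩ := hp
  set S : Set ℕ := (AddSubmonoid.closure (primesIn lam p) : Set ℕ) with hS
  have hqpr := hq.1
  have hrpr := hr.1
  -- boundedness of the complement
  have hmem : ∀ n, q * r ≤ n → n ∈ S := by
    intro n hn
    obtain ⟨a, b, hab⟩ := my_rep q r n hqpr hrpr hne hn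
    rw [hab]
    exact add_mem
      (by simpa [nsmul_eq_mul] using
        (AddSubmonoid.closure (primesIn lam p)).nsmul_mem (AddSubmonoid.subset_closure hq) a)
      (by simpa [nsmul_eq_mul] using
        (AddSubmonoid.closure (primesIn lam p)).nsmul_mem (AddSubmonoid.subset_closure hr) b)
  have hBdd : BddAbove Sᶜ := by
    refine BddAbove.mono ?_ (Set.finite_Iio (q * r)).bddAbove
    intro n hn
    by_contra hlt
    exact hn (hmem n (by simpa [Set.mem_Iio] using hlt))
  have hA : ∀ a ∈ primesIn lam p, a.Prime ∧ p ≤ a := fun a ha => ⟨ha.1, ha.2.1⟩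
  -- key natural-number inequality
  have key : 3 * p ≤ flam lam p + 6 := by
    rcases eq_or_lt_of_le hpp.two_le with h2 | h3
    · omega
    have hp3 : 3 ≤ p := h3
    have hodd : Odd p := hpp.odd_of_ne_two (by omega)
    have hgap : ∀ g : ℕ, g ∈ S → g = 0 ∨ g.Prime ∨ (Even g ∧ 2 * p ≤ g) ∨ 3 * p ≤ g := by
      intro g hgS
      rcases my_struct p (primesIn lam p) hA hp3 g hgS with h | h | h | h
      · exact Or.inl h
      · exact Or.inr (Or.inl (hA g h).1)
      · exact Or.inr (Or.inr (Or.inl h))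
      · exact Or.inr (Or.inr (Or.inr h))
    rcases eq_or_ne p 3 with rfl | hne3
    · have h4 : (4 : ℕ) ∉ S := by
        intro h
        rcases hgap 4 h with h | h | ⟨_, h⟩ | h
        · omega
        · norm_num at h
        · omega
        · omega
      have hfl : (4 : ℕ) ≤ flam lam 3 := le_csSup hBdd h4
      omega
    · have h5 : 5 ≤ p := by rcases hodd with ⟨k, hk⟩; omega
      have hgnot : (3 * p - 6 : ℕ) ∉ S := by
        intro h
        rcases hgap _ h with h | h | ⟨hev, hle⟩ | h
        · omega
        · have : 3 ∣ 3 * p - 6 := ⟨p - 2, by omega⟩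
          rcases h.eq_one_or_self_of_dvd 3 this with h' | h' <;> omega
        · obtain ⟨k, hk⟩ := hodd
          obtain ⟨m, hm⟩ := hev
          omega
        · omega
      have hfl : 3 * p - 6 ≤ flam lam p := le_csSup hBdd hgnot
      omega
  -- conclude over ℝ
  have hp0 : (0 : ℝ) < p := by exact_mod_cast hpp.pos
  rw [sub_le_iff_le_add]
  have hq' : (flam lam p : ℝ) / p + 6 / p = ((flam lam p : ℝ) + 6) / p := by ring
  rw [hq', le_div_iff₀ hp0]
  calc (3 : ℝ) * p = ((3 * p : ℕ) : ℝ) := by push_cast; ring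
    _ ≤ ((flam lam p + 6 : ℕ) : ℝ) := by exact_mod_cast key
    _ = (flam lam p : ℝ) + 6 := by push_cast; ring
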